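/- Assume κ is h-admissible and normalized. Let λ be an ℓ-multipartition all of whose components have at most h columns, let x ∈ ℤ/eℤ, let Y ∈ Add_x(λ), and let μ be the multipartition with [μ] = [λ] ∪ {Y}. Then the one-step degree Σ_{α ∈ Φ⁺, r ∈ ℤ} d_{α,r}(pt(λ), pt(μ)) equals #{A ∈ Add_x(λ) : Y ▷_θ A} − #{R ∈ Rem_x(λ) : Y ▷_θ R}, i.e. the number of addable nodes of λ of residue x lying to the right of Y minus the number of removable nodes of λ of residue x lying to the right of Y. -/

import Mathlib

namespace BC

/-- A node `(r, c, m)`: row `r ≥ 1`, column `c ≥ 1` (1-based), component `m` (0-based). -/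
abbrev Node : Type := ℕ × ℕ × ℕ

/-- An `ℓ`-multipartition: `row m r` is the length of the `(r+1)`-st row of the
`(m+1)`-st component. -/
structure MultiPartition (ℓ : ℕ) : Type where
  row : ℕ → ℕ → ℕ
  antitone : ∀ m r, row m (r + 1) ≤ row m r
  comp_bound : ∀ m, ℓ ≤ m → ∀ r, row m r = 0
  row_finite : ∀ m, ∃ R, ∀ r, R ≤ r → row m r = 0

/-- The number of boxes of a multipartition. -/
noncomputable def size {ℓ : ℕ} (lam : MultiPartition ℓ) : ℕ :=
  ∑ᶠ (m : ℕ), ∑ᶠ (r : ℕ), lam.row m r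

/-- The Young diagram of a multipartition, as a set of nodes. -/
def diag {ℓ : ℕ} (lam : MultiPartition ℓ) : Set Node :=
  {b | 1 ≤ b.1 ∧ 1 ≤ b.2.1 ∧ b.2.1 ≤ lam.row b.2.2 (b.1 - 1)}

/-- The residue `κ_m + c - r` of a node. -/
def res (e : ℕ) (κ : ℕ → ZMod e) (b : Node) : ZMod e :=
  κ b.2.2 + (b.2.1 : ZMod e) - (b.1 : ZMod e)

/-- The (integral part of the) real-line position of a node: `m + ℓ(r - c)` (with
1-based component index). -/
def thetaPos (ℓ : ℕ) (b : Node) : ℤ :=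
  ((b.2.2 : ℤ) + 1) + (ℓ : ℤ) * ((b.1 : ℤ) - (b.2.1 : ℤ))

/-- `NodeDom ℓ b b'` means `b ▷_θ b'` (`b` θ-dominates `b'`; `b'` is to the right of `b`). -/
def NodeDom (ℓ : ℕ) (b b' : Node) : Prop :=
  thetaPos ℓ b < thetaPos ℓ b' ∨
    (thetaPos ℓ b = thetaPos ℓ b' ∧ b.1 + b.2.1 < b'.1 + b'.2.1)

/-- A set of nodes is the Young diagram of some `ℓ`-multipartition. -/
def IsDiag (ℓ : ℕ) (D : Set Node) : Prop := ∃ lam : MultiPartition ℓ, diag lam = D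

/-- `b` is a removable node of the diagram `D`. -/
def RemD (ℓ : ℕ) (D : Set Node) (b : Node) : Prop := b ∈ D ∧ IsDiag ℓ (D \ {b})

/-- `b` is an addable node (in one of the first `h` columns) of the diagram `D`. -/
def AddD (h ℓ : ℕ) (D : Set Node) (b : Node) : Prop :=
  1 ≤ b.2.1 ∧ b.2.1 ≤ h ∧ b ∉ D ∧ IsDiag ℓ (D ∪ {b})

/-- All components of `lam` have at most `h` columns. -/
def HCols (h : ℕ) {ℓ : ℕ} (lam : MultiPartition ℓ) : Prop := ∀ m r, lam.row m r ≤ h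

/-- `κ` is `h`-admissible: for every `i ∈ ℤ/eℤ` at most one component index `m < ℓ`
satisfies `κ m ∈ {i, i+1, …, i+h-1}`. -/
def HAdmissible (e h ℓ : ℕ) (κ : ℕ → ZMod e) : Prop :=
  ∀ (i : ZMod e) (m t : ℕ), m < ℓ → t < ℓ →
    (∃ d : ℕ, d < h ∧ κ m = i + (d : ZMod e)) →
    (∃ d : ℕ, d < h ∧ κ t = i + (d : ZMod e)) → m = t

/-- `κ` is normalized: lifting to `{0, …, e-1}` one has `κ_1 < κ_2 < ⋯ < κ_ℓ` and
`κ_ℓ + h ≢ κ_1 (mod e)`. -/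
def Normalized (e h ℓ : ℕ) (κ : ℕ → ZMod e) : Prop :=
  (∀ m t : ℕ, m < t → t < ℓ → (κ m).val < (κ t).val) ∧
    κ (ℓ - 1) + (h : ZMod e) ≠ κ 0

/-- The shift vector `ρ` (0-based index `a = h·(m-1) + (i-1)` gives `ρ_a = e - κ_m - i + 1`). -/
def rhoZ (e h : ℕ) (κ : ℕ → ZMod e) (a : ℕ) : ℤ :=
  (e : ℤ) - ((κ (a / h)).val : ℤ) - ((a % h : ℕ) : ℤ)

/-- The pairing `⟨x + ρ, ε_i - ε_j⟩`. -/
def pairV (e h : ℕ) (κ : ℕ → ZMod e) (x : ℕ → ℝ) (i j : ℕ) : ℝ :=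
  (x i + (rhoZ e h κ i : ℝ)) - (x j + (rhoZ e h κ j : ℝ))

/-- `x` lies on the hyperplane `E(ε_i - ε_j, re)`. -/
def OnWall (e h : ℕ) (κ : ℕ → ZMod e) (x : ℕ → ℝ) (i j : ℕ) (r : ℤ) : Prop :=
  pairV e h κ x i j = (r : ℝ) * (e : ℝ)

/-- `x ∈ E^<(ε_i - ε_j, re)`: `⟨x+ρ,α⟩ - re` and `⟨ρ,α⟩ - re` are nonzero of the same sign. -/
def InLt (e h : ℕ) (κ : ℕ → ZMod e) (x : ℕ → ℝ) (i j : ℕ) (r : ℤ) : Prop :=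
  0 < (pairV e h κ x i j - (r : ℝ) * (e : ℝ)) *
      (pairV e h κ (fun _ => 0) i j - (r : ℝ) * (e : ℝ))

/-- `x ∈ E^>(ε_i - ε_j, re)`: `⟨x+ρ,α⟩ - re` and `⟨ρ,α⟩ - re` are nonzero of opposite signs. -/
def InGt (e h : ℕ) (κ : ℕ → ZMod e) (x : ℕ → ℝ) (i j : ℕ) (r : ℤ) : Prop :=
  (pairV e h κ x i j - (r : ℝ) * (e : ℝ)) *
      (pairV e h κ (fun _ => 0) i j - (r : ℝ) * (e : ℝ)) < 0

/-- The reflection `s_{ε_i - ε_j, re} · x = x - (⟨x+ρ,α⟩ - re) α`. -/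
def reflV (e h : ℕ) (κ : ℕ → ZMod e) (i j : ℕ) (r : ℤ) (x : ℕ → ℝ) : ℕ → ℝ :=
  fun a => x a - (pairV e h κ x i j - (r : ℝ) * (e : ℝ)) *
    ((if a = i then (1 : ℝ) else 0) - (if a = j then (1 : ℝ) else 0))

-- The local degree contribution `d_{α,r}(x,y)` for `α = ε_i - ε_j`.
open Classical in
noncomputable def dval (e h : ℕ) (κ : ℕ → ZMod e) (x y : ℕ → ℝ) (i j : ℕ) (r : ℤ) : ℤ :=
  if OnWall e h κ x i j r ∧ InLt e h κ y i j r then 1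
  else if InGt e h κ x i j r ∧ OnWall e h κ y i j r then -1
  else 0

-- The degree `d(x, y) = Σ_{α ∈ Φ⁺, r ∈ ℤ} d_{α,r}(x,y)` of a single step.
open Classical in
noncomputable def stepDeg (e h ℓ : ℕ) (κ : ℕ → ZMod e) (x y : ℕ → ℝ) : ℤ :=
  ∑ i ∈ Finset.range (h * ℓ), ∑ j ∈ Finset.range (h * ℓ),
    if i < j then ∑ᶠ r : ℤ, dval e h κ x y i j r else 0

/-- The `k`-th point `s(k) = ε_{s(1)} + ⋯ + ε_{s(k)}` of a path (with 0-based steps). -/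
def pts (s : ℕ → ℕ) (k : ℕ) : ℕ → ℝ :=
  fun a => ((Finset.filter (fun i => s i = a) (Finset.range k)).card : ℝ)

/-- `s` is a (normalized) path of length `n` with steps among `ε_1, …, ε_N`. -/
def IsPath (N n : ℕ) (s : ℕ → ℕ) : Prop :=
  (∀ k, k < n → s k < N) ∧ (∀ k, n ≤ k → s k = 0)

/-- The degree of a path of length `n`. -/
noncomputable def pathDeg (e h ℓ : ℕ) (κ : ℕ → ZMod e) (n : ℕ) (s : ℕ → ℕ) : ℤ :=
  ∑ k ∈ Finset.range n, stepDeg e h ℓ κ (pts s k) (pts s (k + 1))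

/-- `t` is obtained from `s` by one reflection `s^k_{α,re}` (at a point of `s` lying
on the corresponding hyperplane). -/
def ReflStep (e h ℓ n : ℕ) (κ : ℕ → ZMod e) (s t : ℕ → ℕ) : Prop :=
  IsPath (h * ℓ) n s ∧ IsPath (h * ℓ) n t ∧
  ∃ (k i j : ℕ) (r : ℤ), 1 ≤ k ∧ k ≤ n ∧ i < j ∧ j < h * ℓ ∧
    OnWall e h κ (pts s k) i j r ∧
    (∀ l, l ≤ k → pts t l = pts s l) ∧
    (∀ l, k ≤ l → l ≤ n → pts t l = reflV e h κ i j r (pts s l))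

/-- `PathSim … s t` : the path `t` can be obtained from `s` by finitely many reflections,
i.e. `t ∼ s`. -/
def PathSim (e h ℓ n : ℕ) (κ : ℕ → ZMod e) (s t : ℕ → ℕ) : Prop :=
  Relation.ReflTransGen (ReflStep e h ℓ n κ) s t

/-- A path is dominant if all of its points lie in the (closed interior of the)
dominant Weyl chamber. -/
def DominantPath (e h ℓ n : ℕ) (κ : ℕ → ZMod e) (s : ℕ → ℕ) : Prop :=
  ∀ k, k ≤ n → ∀ m i j, m < ℓ → i < j → j < h →
    0 < pairV e h κ (pts s k) (h * m + i) (h * m + j)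

/-- The length of the `i`-th column (1-based) of the `(m+1)`-st component. -/
noncomputable def colLen {ℓ : ℕ} (lam : MultiPartition ℓ) (m i : ℕ) : ℕ :=
  Set.ncard {r : ℕ | i ≤ lam.row m r}

/-- The point `pt(λ) ∈ E` associated to a multipartition. -/
noncomputable def ptv (h : ℕ) {ℓ : ℕ} (lam : MultiPartition ℓ) : ℕ → ℝ :=
  fun a => (colLen lam (a / h) (a % h + 1) : ℝ)

/-- The point of `E` associated to a Young diagram (as a set of nodes). -/
noncomputable def ptD (h : ℕ) (D : Set Node) : ℕ → ℝ :=
  fun a => (Set.ncard {r : ℕ | ((r + 1 : ℕ), ((a % h) + 1 : ℕ), (a / h : ℕ)) ∈ D} : ℝ)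

/-- `X` is the least dominant removable node of `D`: it is removable and θ-dominated by
every other removable node. -/
def IsLeastRem (ℓ : ℕ) (D : Set Node) (X : Node) : Prop :=
  RemD ℓ D X ∧ ∀ Y, RemD ℓ D Y → Y ≠ X → NodeDom ℓ Y X

/-- The least dominant removable node of a diagram (chosen by `Classical.epsilon`). -/
noncomputable def leastRem (ℓ : ℕ) (D : Set Node) : Node :=
  Classical.epsilon (IsLeastRem ℓ D)

/-- `PDiag ℓ D j` is the diagram `D` with its least dominant removable node removed `j`
times; for `D = [μ]` with `|μ| = n` this is `μ^{(n-j)}`. -/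
noncomputable def PDiag (ℓ : ℕ) (D : Set Node) : ℕ → Set Node
  | 0 => D
  | j + 1 => PDiag ℓ D j \ {leastRem ℓ (PDiag ℓ D j)}

/-- The distinguished path `t^μ` of length `n`: its `k`-th step (0-based) is the basis
direction of the column of `X_{k+1}`, the least dominant removable node of `μ^{(k+1)}`. -/
noncomputable def tPath (h ℓ n : ℕ) (μ : MultiPartition ℓ) : ℕ → ℕ :=
  fun k =>
    if k < n then
      h * (leastRem ℓ (PDiag ℓ (diag μ) (n - 1 - k))).2.2 +
        ((leastRem ℓ (PDiag ℓ (diag μ) (n - 1 - k))).2.1 - 1)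
    else 0

/-- `u ↑_{α,re} v` : `u = s_{α,re}·v`, `u ∈ E^<(α,re)`, `v ∈ E^>(α,re)`. -/
def UpStep (e h ℓ : ℕ) (κ : ℕ → ZMod e) (u v : ℕ → ℝ) : Prop :=
  ∃ (i j : ℕ) (r : ℤ), i < j ∧ j < h * ℓ ∧ u = reflV e h κ i j r v ∧
    InLt e h κ u i j r ∧ InGt e h κ v i j r

/-- The strong linkage order: `Up … u v` means `u ↑ v`. -/
def Up (e h ℓ : ℕ) (κ : ℕ → ZMod e) : (ℕ → ℝ) → (ℕ → ℝ) → Prop :=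
  Relation.ReflTransGen (UpStep e h ℓ κ)

/-- The length `ℓ(v)`: the number of hyperplanes lying strictly between `v` and the
origin. -/
noncomputable def lenPt (e h ℓ : ℕ) (κ : ℕ → ZMod e) (v : ℕ → ℝ) : ℕ :=
  Set.ncard {p : ℕ × ℕ × ℤ | p.1 < p.2.1 ∧ p.2.1 < h * ℓ ∧ InGt e h κ v p.1 p.2.1 p.2.2}

/-- The loading `I_{(r,c,m)} = m + ℓ(r-c) + (r+c)ε` of a node (with 1-based component). -/
def load (ℓ : ℕ) (ε : ℝ) (b : Node) : ℝ :=
  ((b.2.2 : ℝ) + 1) + (ℓ : ℝ) * ((b.1 : ℝ) - (b.2.1 : ℝ)) + ((b.1 : ℝ) + (b.2.1 : ℝ)) * ε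

/-- `T` is a residue-respecting semistandard tableau of shape the diagram `D` and weight
the diagram `Dw`, normalized to vanish off `D`. -/
def IsSStd (e ℓ : ℕ) (κ : ℕ → ZMod e) (ε : ℝ) (D Dw : Set Node) (T : Node → ℝ) : Prop :=
  Set.BijOn T D (load ℓ ε '' Dw) ∧
  (∀ b ∈ D, b.1 = 1 → b.2.1 = 1 → ((b.2.2 : ℝ) + 1) < T b) ∧
  (∀ b ∈ D, 2 ≤ b.1 → T (b.1 - 1, b.2.1, b.2.2) + (ℓ : ℝ) < T b) ∧
  (∀ b ∈ D, 2 ≤ b.2.1 → T (b.1, b.2.1 - 1, b.2.2) - (ℓ : ℝ) < T b) ∧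
  (∀ b ∈ D, ∀ b' ∈ Dw, T b = load ℓ ε b' → res e κ b = res e κ b') ∧
  (∀ b, b ∉ D → T b = 0)

/-- The node `Y_{k+1}` of the tableau `T`: the node of the shape diagram whose entry is
the loading of `X_{k+1}`. -/
noncomputable def Ynd (ℓ n : ℕ) (ε : ℝ) (Dlam Dmu : Set Node) (T : Node → ℝ) (k : ℕ) :
    Node :=
  Classical.epsilon (fun b : Node =>
    b ∈ Dlam ∧ T b = load ℓ ε (leastRem ℓ (PDiag ℓ Dmu (n - 1 - k))))

/-- The path `ω(T)` associated to a semistandard tableau. -/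
noncomputable def omegaT (h ℓ n : ℕ) (ε : ℝ) (Dlam Dmu : Set Node) (T : Node → ℝ) :
    ℕ → ℕ :=
  fun k =>
    if k < n then
      h * (Ynd ℓ n ε Dlam Dmu T k).2.2 + ((Ynd ℓ n ε Dlam Dmu T k).2.1 - 1)
    else 0

/-- The shape `λ^{(k)}` of the restriction of the tableau `T` to entries in `I_{μ^{(k)}}`. -/
noncomputable def LShape (ℓ n : ℕ) (ε : ℝ) (Dlam Dmu : Set Node) (T : Node → ℝ) (k : ℕ) :
    Set Node :=
  {b | b ∈ Dlam ∧ T b ∈ load ℓ ε '' PDiag ℓ Dmu (n - k)}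

/-- The degree of a semistandard tableau, computed from its component word. -/
noncomputable def degT (e h ℓ n : ℕ) (κ : ℕ → ZMod e) (ε : ℝ) (Dlam Dmu : Set Node)
    (T : Node → ℝ) : ℤ :=
  ∑ k ∈ Finset.range n,
    ((Set.ncard {A | AddD h ℓ (LShape ℓ n ε Dlam Dmu T k) A ∧
        res e κ A = res e κ (Ynd ℓ n ε Dlam Dmu T k) ∧
        NodeDom ℓ (Ynd ℓ n ε Dlam Dmu T k) A} : ℤ) -
      (Set.ncard {R | RemD ℓ (LShape ℓ n ε Dlam Dmu T k) R ∧
        res e κ R = res e κ (Ynd ℓ n ε Dlam Dmu T k) ∧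
        NodeDom ℓ (Ynd ℓ n ε Dlam Dmu T k) R} : ℤ))

/-- The θ-dominance order on multipartitions: `ThetaDomMP e ℓ κ μ lam` means `μ ⊴_θ λ`. -/
noncomputable def ThetaDomMP (e ℓ : ℕ) (κ : ℕ → ZMod e) (μ lam : MultiPartition ℓ) : Prop :=
  ∀ b ∈ diag μ,
    Set.ncard {b' | b' ∈ diag μ ∧ res e κ b' = res e κ b ∧ NodeDom ℓ b' b} ≤
      Set.ncard {b' | b' ∈ diag lam ∧ res e κ b' = res e κ b ∧ NodeDom ℓ b' b}

/-- The multipartition `det_h(λ)`, obtained by prepending a row of length `h` to each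
component. -/
def detMP (h : ℕ) {ℓ : ℕ} (lam : MultiPartition ℓ) (hc : HCols h lam) : MultiPartition ℓ where
  row m r := if m < ℓ then (if r = 0 then h else lam.row m (r - 1)) else 0
  antitone m r := by
    by_cases hm : m < ℓ
    · by_cases hr : r = 0
      · subst hr
        simpa [hm] using hc m 0
      · have h2 : r - 1 + 1 = r := Nat.succ_pred_eq_of_pos (Nat.pos_of_ne_zero hr)
        have h3 := lam.antitone m (r - 1)
        rw [h2] at h3
        simpa [hm, hr] using h3
    · simp [hm]
  comp_bound m hm r := by simp [Nat.not_lt.mpr hm]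
  row_finite m := by
    obtain ⟨R, hR⟩ := lam.row_finite m
    refine ⟨R + 1, fun r hr => ?_⟩
    by_cases hm : m < ℓ
    · have hr0 : r ≠ 0 := by omega
      simp only [hm, if_true, hr0, if_false]
      exact hR (r - 1) (by omega)
    · simp [hm]

/-- The path `det(s)`: first the `N = hℓ` steps `ε_1, …, ε_{hℓ}`, then the steps of `s`. -/
def detPath (N n : ℕ) (s : ℕ → ℕ) : ℕ → ℕ :=
  fun k => if k < N then k else if k < N + n then s (k - N) else 0


section AuxCol

variable {ℓ : ℕ}

lemma row_anti (lam : MultiPartition ℓ) (m : ℕ) : ∀ r r', r ≤ r' → lam.row m r' ≤ lam.row m r := by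
  intro r r' hrr
  induction r' with
  | zero => have : r = 0 := by omega
            simp [this]
  | succ n ih =>
    rcases Nat.lt_or_ge r (n+1) with hl | hg
    · exact le_trans (lam.antitone m n) (ih (by omega))
    · have : r = n + 1 := by omega
      simp [this]

lemma lt_colLen_iff (lam : MultiPartition ℓ) (m c : ℕ) (hc : 1 ≤ c) (r : ℕ) :
    r < colLen lam m c ↔ c ≤ lam.row m r := by
  obtain ⟨R, hR⟩ := lam.row_finite m
  set T : Set ℕ := {r | lam.row m r < c} with hT
  have hTne : T.Nonempty := ⟨R, by simp only [hT, Set.mem_setOf_eq]; rw [hR R le_rfl]; omega⟩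
  set K := sInf T with hK
  have hKmem : K ∈ T := Nat.sInf_mem hTne
  have hiff : ∀ s, c ≤ lam.row m s ↔ s < K := by
    intro s
    constructor
    · intro hcr
      by_contra hge
      push_neg at hge
      have h1 := row_anti lam m K s hge
      have h2 : lam.row m K < c := hKmem
      omega
    · intro hrK
      by_contra hlt
      push_neg at hlt
      have : s ∈ T := hlt
      have := Nat.sInf_le this
      omega
  have hset : {s | c ≤ lam.row m s} = Set.Iio K := by
    ext s; simp [hiff s, Set.mem_Iio]
  have hKcol : colLen lam m c = K := by
    rw [colLen, hset, ← Finset.coe_range, Set.ncard_coe_finset, Finset.card_range]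
  rw [hKcol, hiff]

lemma colLen_anti (lam : MultiPartition ℓ) (m c c' : ℕ) (hc : 1 ≤ c) (hcc : c ≤ c') :
    colLen lam m c' ≤ colLen lam m c := by
  by_contra hlt
  push_neg at hlt
  have h2 := (lt_colLen_iff lam m c' (by omega) (colLen lam m c)).mp hlt
  have h3 := (lt_colLen_iff lam m c hc (colLen lam m c)).mpr (by omega)
  omega

lemma colLen_comp (lam : MultiPartition ℓ) (m c : ℕ) (hc : 1 ≤ c) (hm : ℓ ≤ m) :
    colLen lam m c = 0 := by
  by_contra hne
  have h1 := (lt_colLen_iff lam m c hc 0).mp (by omega)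
  rw [lam.comp_bound m hm 0] at h1; omega

lemma colLen_gt_h {h : ℕ} (lam : MultiPartition ℓ) (hcols : HCols h lam) (m c : ℕ) (hcgt : h < c) :
    colLen lam m c = 0 := by
  by_contra hne
  have h1 := (lt_colLen_iff lam m c (by omega) 0).mp (by omega)
  have h2 := hcols m 0
  omega

lemma mem_diag_iff (lam : MultiPartition ℓ) (r c m : ℕ) (hc : 1 ≤ c) (hr : 1 ≤ r) :
    ((r, c, m) : Node) ∈ diag lam ↔ r - 1 < colLen lam m c := by
  rw [lt_colLen_iff lam m c hc]
  simp [diag, hr, hc]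

end AuxCol

section AuxDiag

variable {ℓ : ℕ}

lemma diag_union_forward (lam ν : MultiPartition ℓ) (r c m : ℕ) (hc : 1 ≤ c)
    (hnot : ((r,c,m) : Node) ∉ diag lam)
    (heq : diag ν = diag lam ∪ {((r,c,m) : Node)}) :
    m < ℓ ∧ 1 ≤ r ∧ r = colLen lam m c + 1 ∧ (c = 1 ∨ r ≤ colLen lam m (c-1)) ∧
    (∀ m' c', 1 ≤ c' → colLen ν m' c' = colLen lam m' c' + (if m' = m ∧ c' = c then 1 else 0)) := by
  have hYν : ((r,c,m) : Node) ∈ diag ν := by rw [heq]; exact Set.mem_union_right _ rfl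
  have hr1 : 1 ≤ r := hYν.1
  have hcle : c ≤ ν.row m (r - 1) := hYν.2.2
  have hm : m < ℓ := by
    by_contra hge
    rw [ν.comp_bound m (by omega) (r-1)] at hcle
    omega
  have key : ∀ m' c' s : ℕ, 1 ≤ c' →
      (s < colLen ν m' c' ↔ (s < colLen lam m' c' ∨ (m' = m ∧ c' = c ∧ s + 1 = r))) := by
    intro m' c' s hc'
    have h1 := mem_diag_iff ν (s+1) c' m' hc' (by omega)
    have h2 := mem_diag_iff lam (s+1) c' m' hc' (by omega)
    simp only [Nat.add_sub_cancel] at h1 h2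
    rw [← h1, heq, Set.mem_union, Set.mem_singleton_iff, h2, Prod.mk.injEq, Prod.mk.injEq]
    constructor
    · rintro (hs | ⟨e1, e2, e3⟩)
      · exact Or.inl hs
      · exact Or.inr ⟨e3, e2, e1⟩
    · rintro (hs | ⟨e1, e2, e3⟩)
      · exact Or.inl hs
      · exact Or.inr ⟨e3, e2, e1⟩
  have hYnotlam : ¬ (r - 1 < colLen lam m c) := by
    rw [← mem_diag_iff lam r c m hc hr1]; exact hnot
  have hmain : colLen ν m c = colLen lam m c + 1 ∧ r = colLen lam m c + 1 := by
    have e1 := key m c (colLen lam m c) hc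
    have e2 := key m c (r-1) hc
    have e3 := key m c (colLen lam m c + 1) hc
    simp only [and_true, true_and] at e1 e2 e3
    omega
  have hcolν : ∀ m' c', 1 ≤ c' →
      colLen ν m' c' = colLen lam m' c' + (if m' = m ∧ c' = c then 1 else 0) := by
    intro m' c' hc'
    by_cases hmc : m' = m ∧ c' = c
    · rw [if_pos hmc, hmc.1, hmc.2]; exact hmain.1
    · rw [if_neg hmc]
      have e1 := key m' c' (colLen lam m' c') hc'
      have e2 := key m' c' (colLen ν m' c') hc'
      have hne : ¬ (m' = m ∧ c' = c ∧ colLen lam m' c' + 1 = r) := fun hx => hmc ⟨hx.1, hx.2.1⟩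
      have hne2 : ¬ (m' = m ∧ c' = c ∧ colLen ν m' c' + 1 = r) := fun hx => hmc ⟨hx.1, hx.2.1⟩
      omega
  refine ⟨hm, hr1, hmain.2, ?_, hcolν⟩
  by_cases hc1 : c = 1
  · exact Or.inl hc1
  · right
    have e1 := hcolν m (c-1) (by omega)
    have hne : ¬ (m = m ∧ c - 1 = c) := by omega
    rw [if_neg hne] at e1
    have e2 : colLen ν m c ≤ colLen ν m (c-1) := colLen_anti ν m (c-1) c (by omega) (by omega)
    omega

lemma diag_union_exists (lam : MultiPartition ℓ) (r c m : ℕ) (hc : 1 ≤ c) (hm : m < ℓ)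
    (hr : r = colLen lam m c + 1) (hadd : c = 1 ∨ r ≤ colLen lam m (c-1)) :
    ∃ ν : MultiPartition ℓ, diag ν = diag lam ∪ {((r,c,m) : Node)} := by
  have hr1 : 1 ≤ r := by omega
  have hrow : lam.row m (r-1) = c - 1 := by
    have h1 : ¬ (r - 1 < colLen lam m c) := by omega
    rw [lt_colLen_iff lam m c hc] at h1
    by_cases h2 : c = 1
    · omega
    · have h4 : r ≤ colLen lam m (c-1) := by
        rcases hadd with h5 | h5
        · omega
        · exact h5
      have h3 : r - 1 < colLen lam m (c-1) := by omega
      rw [lt_colLen_iff lam m (c-1) (by omega)] at h3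
      omega
  have hnext : lam.row m r ≤ c - 1 := by
    have := row_anti lam m (r-1) r (by omega)
    omega
  refine ⟨⟨fun m'' r'' => if m'' = m ∧ r'' = r - 1 then c else lam.row m'' r'', ?_, ?_, ?_⟩, ?_⟩
  · intro m'' r''
    by_cases h1 : m'' = m ∧ r'' + 1 = r - 1
    · rw [if_pos h1, if_neg (by omega)]
      have h3 : r'' < colLen lam m c := by omega
      rw [lt_colLen_iff lam m c hc] at h3
      rw [h1.1]
      omega
    · rw [if_neg h1]
      by_cases h2 : m'' = m ∧ r'' = r - 1
      · rw [if_pos h2, h2.1]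
        have : r'' + 1 = r := by omega
        rw [this]
        omega
      · rw [if_neg h2]; exact lam.antitone m'' r''
  · intro m'' hm'' r''
    rw [if_neg (by omega), lam.comp_bound m'' hm'' r'']
  · intro m''
    obtain ⟨R, hR⟩ := lam.row_finite m''
    refine ⟨max R (r + 1), fun r'' hr'' => ?_⟩
    rw [if_neg (by omega)]
    exact hR r'' (by omega)
  · ext b
    obtain ⟨rb, cb, mb⟩ := b
    simp only [diag, Set.mem_setOf_eq, Set.mem_union, Set.mem_singleton_iff, Prod.mk.injEq]
    constructor
    · rintro ⟨hrb, hcb, hle⟩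
      by_cases hmb : mb = m ∧ rb - 1 = r - 1
      · rw [if_pos hmb] at hle
        obtain ⟨hm1, hr2⟩ := hmb
        by_cases hce : cb = c
        · exact Or.inr ⟨by omega, hce, hm1⟩
        · left
          refine ⟨hrb, hcb, ?_⟩
          rw [hm1, hr2, hrow]
          omega
      · rw [if_neg hmb] at hle
        exact Or.inl ⟨hrb, hcb, hle⟩
    · rintro (⟨hrb, hcb, hle⟩ | ⟨h1, h2, h3⟩)
      · refine ⟨hrb, hcb, ?_⟩
        by_cases hmb : mb = m ∧ rb - 1 = r - 1
        · rw [if_pos hmb]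
          rw [hmb.1, hmb.2, hrow] at hle
          omega
        · rw [if_neg hmb]; exact hle
      · subst h1; subst h2; subst h3
        exact ⟨by omega, hc, by rw [if_pos ⟨rfl, rfl⟩]⟩

lemma diag_sdiff_exists (lam : MultiPartition ℓ) (r c m : ℕ) (hc : 1 ≤ c) (hr1 : 1 ≤ r)
    (hrcol : r = colLen lam m c) (hnextcol : colLen lam m (c+1) < r) :
    ∃ ν : MultiPartition ℓ, diag ν = diag lam \ {((r,c,m) : Node)} := by
  have hrow : lam.row m (r-1) = c := by
    have h1 : r - 1 < colLen lam m c := by omega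
    rw [lt_colLen_iff lam m c hc] at h1
    have h2 : ¬ (r - 1 < colLen lam m (c+1)) := by omega
    rw [lt_colLen_iff lam m (c+1) (by omega)] at h2
    omega
  have hnext : lam.row m r ≤ c - 1 := by
    have h1 : ¬ (r < colLen lam m c) := by omega
    rw [lt_colLen_iff lam m c hc] at h1
    omega
  refine ⟨⟨fun m'' r'' => if m'' = m ∧ r'' = r - 1 then c - 1 else lam.row m'' r'', ?_, ?_, ?_⟩, ?_⟩
  · intro m'' r''
    by_cases h1 : m'' = m ∧ r'' + 1 = r - 1
    · rw [if_pos h1, if_neg (by omega)]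
      have h3 : r'' < colLen lam m c := by omega
      rw [lt_colLen_iff lam m c hc] at h3
      rw [h1.1]
      omega
    · rw [if_neg h1]
      by_cases h2 : m'' = m ∧ r'' = r - 1
      · rw [if_pos h2, h2.1]
        have hre : r'' + 1 = r := by omega
        rw [hre]
        omega
      · rw [if_neg h2]; exact lam.antitone m'' r''
  · intro m'' hm'' r''
    have hm : m < ℓ := by
      by_contra hge
      have := colLen_comp lam m c hc (by omega)
      omega
    rw [if_neg (by omega), lam.comp_bound m'' hm'' r'']
  · intro m''
    obtain ⟨R, hR⟩ := lam.row_finite m''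
    refine ⟨max R (r + 1), fun r'' hr'' => ?_⟩
    rw [if_neg (by omega)]
    exact hR r'' (by omega)
  · ext b
    obtain ⟨rb, cb, mb⟩ := b
    simp only [diag, Set.mem_setOf_eq, Set.mem_diff, Set.mem_singleton_iff, Prod.mk.injEq]
    constructor
    · rintro ⟨hrb, hcb, hle⟩
      by_cases hmb : mb = m ∧ rb - 1 = r - 1
      · rw [if_pos hmb] at hle
        obtain ⟨hm1, hr2⟩ := hmb
        refine ⟨⟨hrb, hcb, ?_⟩, ?_⟩
        · rw [hm1, hr2, hrow]; omega
        · rintro ⟨e1, e2, e3⟩; omega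
      · rw [if_neg hmb] at hle
        refine ⟨⟨hrb, hcb, hle⟩, ?_⟩
        rintro ⟨e1, e2, e3⟩
        exact hmb ⟨e3, by omega⟩
    · rintro ⟨⟨hrb, hcb, hle⟩, hne⟩
      refine ⟨hrb, hcb, ?_⟩
      by_cases hmb : mb = m ∧ rb - 1 = r - 1
      · rw [if_pos hmb]
        obtain ⟨hm1, hr2⟩ := hmb
        have hrbr : rb = r := by omega
        have hcbne : cb ≠ c := fun hx => hne ⟨hrbr, hx, hm1⟩
        rw [hm1, hr2, hrow] at hle
        omega
      · rw [if_neg hmb]; exact hle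

lemma addD_iff {h : ℕ} (lam : MultiPartition ℓ) (r c m : ℕ) :
    AddD h ℓ (diag lam) (r, c, m) ↔
      (1 ≤ c ∧ c ≤ h ∧ m < ℓ ∧ r = colLen lam m c + 1 ∧ (c = 1 ∨ r ≤ colLen lam m (c-1))) := by
  constructor
  · rintro ⟨h1, h2, h3, ν, h4⟩
    obtain ⟨hm, hr, hcol, hadd, _⟩ := diag_union_forward lam ν r c m h1 h3 h4
    exact ⟨h1, h2, hm, hcol, hadd⟩
  · rintro ⟨h1, h2, h3, h4, h5⟩
    have hnot : ((r,c,m):Node) ∉ diag lam := by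
      rw [mem_diag_iff lam r c m h1 (by omega)]; omega
    exact ⟨h1, h2, hnot, diag_union_exists lam r c m h1 h3 h4 h5⟩

lemma remD_iff (lam : MultiPartition ℓ) (r c m : ℕ) :
    RemD ℓ (diag lam) (r, c, m) ↔
      (1 ≤ c ∧ 1 ≤ r ∧ m < ℓ ∧ r = colLen lam m c ∧ colLen lam m (c+1) < r) := by
  constructor
  · rintro ⟨hmem, ν, hν⟩
    have hcc : 1 ≤ c := hmem.2.1
    have hrr : 1 ≤ r := hmem.1
    have hnot : ((r,c,m):Node) ∉ diag ν := by rw [hν]; simp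
    have heq : diag lam = diag ν ∪ {((r,c,m):Node)} := by
      rw [hν, Set.diff_union_self]
      exact (Set.union_eq_self_of_subset_right (Set.singleton_subset_iff.mpr hmem)).symm
    obtain ⟨hm, _, hcol, _, hc2⟩ := diag_union_forward ν lam r c m hcc hnot heq
    have e1 := hc2 m c hcc
    have e2 := hc2 m (c+1) (by omega)
    rw [if_pos ⟨rfl, rfl⟩] at e1
    rw [if_neg (by omega)] at e2
    have e3 : colLen ν m (c+1) ≤ colLen ν m c := colLen_anti ν m c (c+1) hcc (by omega)
    exact ⟨hcc, hrr, hm, by omega, by omega⟩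
  · rintro ⟨h1, h2, h3, h4, h5⟩
    have hmem : ((r,c,m):Node) ∈ diag lam := by rw [mem_diag_iff lam r c m h1 h2]; omega
    exact ⟨hmem, diag_sdiff_exists lam r c m h1 h2 h4 h5⟩

end AuxDiag

section AuxDom

lemma int_mul_cases (e k : ℤ) (he : 0 < e) : e * k = 0 ∨ e ≤ e * k ∨ e * k ≤ -e := by
  rcases lt_trichotomy k 0 with hk | hk | hk
  · right; right
    have h1 : k ≤ -1 := by omega
    have := mul_le_mul_of_nonneg_left h1 (le_of_lt he)
    omega
  · left; rw [hk]; ring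
  · right; left
    have h1 : 1 ≤ k := by omega
    have := mul_le_mul_of_nonneg_left h1 (le_of_lt he)
    omega

lemma int_mul_range (e k : ℤ) (he : 0 < e) (h1 : -e < e * k) (h2 : e * k < 2 * e) :
    e * k = 0 ∨ e * k = e := by
  have hc1 : -1 < k := by
    by_contra hc
    push_neg at hc
    have := mul_le_mul_of_nonneg_left hc (le_of_lt he)
    omega
  have hc2 : k < 2 := by
    by_contra hc
    push_neg at hc
    have := mul_le_mul_of_nonneg_left hc (le_of_lt he)
    omega
  interval_cases k
  · left; ring
  · right; ring

lemma kappa_window {e h ℓ : ℕ} (κ : ℕ → ZMod e) (he : 2 ≤ e) (hh : 1 ≤ h)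
    (hadm : HAdmissible e h ℓ κ) {mp mq : ℕ} (hp : mp < ℓ) (hq : mq < ℓ) (hne : mp ≠ mq) :
    h ≤ (κ mq - κ mp).val ∧ (κ mq - κ mp).val ≤ e - h := by
  haveI : NeZero e := ⟨by omega⟩
  have hδlt : (κ mq - κ mp).val < e := ZMod.val_lt _
  have hcast : (((κ mq - κ mp).val : ℕ) : ZMod e) = κ mq - κ mp := by
    rw [ZMod.natCast_val, ZMod.cast_id]
  have h1 : h ≤ (κ mq - κ mp).val := by
    by_contra hlt
    push_neg at hlt
    have := hadm (κ mp) mq mp hq hp ⟨(κ mq - κ mp).val, hlt, by rw [hcast]; ring⟩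
      ⟨0, by omega, by simp⟩
    exact hne this.symm
  refine ⟨h1, ?_⟩
  by_contra hgt
  push_neg at hgt
  have hcast2 : ((e - (κ mq - κ mp).val : ℕ) : ZMod e) = κ mp - κ mq := by
    have h2 : ((e - (κ mq - κ mp).val : ℕ) : ZMod e)
        = ((e : ℕ) : ZMod e) - (((κ mq - κ mp).val : ℕ) : ZMod e) := by
      rw [Nat.cast_sub (by omega)]
    rw [h2, ZMod.natCast_self, hcast]; ring
  have := hadm (κ mq) mp mq hp hq ⟨e - (κ mq - κ mp).val, by omega, by rw [hcast2]; ring⟩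
    ⟨0, by omega, by simp⟩
  exact hne this

lemma res_dvd {e : ℕ} [NeZero e] (κ : ℕ → ZMod e) (rp cp mp rq cq mq : ℕ)
    (hres : res e κ (rp, cp, mp) = res e κ (rq, cq, mq)) :
    (e : ℤ) ∣ ((((κ mq).val : ℤ) + (cq:ℤ) - (rq:ℤ)) - (((κ mp).val:ℤ) + (cp:ℤ) - (rp:ℤ))) := by
  rw [← ZMod.intCast_zmod_eq_zero_iff_dvd]
  push_cast [ZMod.natCast_val, ZMod.cast_id]
  rw [res, res] at hres
  simp only at hres
  push_cast at hres
  linear_combination - hres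

lemma nodeDom_core {e h ℓ : ℕ} (κ : ℕ → ZMod e) (hh : 1 ≤ h) (hl : 1 ≤ ℓ)
    (he : h * ℓ < e) (hadm : HAdmissible e h ℓ κ)
    (rp cp mp rq cq mq : ℕ) (hmp : mp < ℓ) (hmq : mq < ℓ)
    (hcp1 : 1 ≤ cp) (hcph : cp ≤ h) (hcq1 : 1 ≤ cq) (hcqh : cq ≤ h)
    (hres : res e κ (rp, cp, mp) = res e κ (rq, cq, mq)) :
    (NodeDom ℓ (rp, cp, mp) (rq, cq, mq) ↔ rp < rq) ∧ (rp = rq → cp = cq ∧ mp = mq) := by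
  have hhl : (h:ℤ) * (ℓ:ℤ) < e := by exact_mod_cast he
  have hgeh : (h:ℤ) ≤ (h:ℤ) * (ℓ:ℤ) := by
    calc (h:ℤ) = (h:ℤ) * 1 := by ring
    _ ≤ (h:ℤ) * (ℓ:ℤ) := by
        apply mul_le_mul_of_nonneg_left (by exact_mod_cast hl) (by positivity)
  have hgel : (ℓ:ℤ) ≤ (h:ℤ) * (ℓ:ℤ) := by
    calc (ℓ:ℤ) = 1 * (ℓ:ℤ) := by ring
    _ ≤ (h:ℤ) * (ℓ:ℤ) := by
        apply mul_le_mul_of_nonneg_right (by exact_mod_cast hh) (by positivity)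
  have he2 : 2 ≤ e := by
    have : (2:ℤ) ≤ e := by omega
    exact_mod_cast this
  haveI : NeZero e := ⟨by omega⟩
  obtain ⟨k, hk⟩ := res_dvd κ rp cp mp rq cq mq hres
  have hkf := int_mul_cases e k (by omega)
  have hvp : (κ mp).val < e := ZMod.val_lt _
  have hvq : (κ mq).val < e := ZMod.val_lt _
  -- the residue shift t
  have htf : (mp = mq ∧ (((κ mq).val:ℤ) - ((κ mp).val:ℤ)) = 0) ∨
      ((h:ℤ) ≤ (((κ mq).val:ℤ) - ((κ mp).val:ℤ)) ∧ (((κ mq).val:ℤ) - ((κ mp).val:ℤ)) ≤ (e:ℤ) - h) ∨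
      ((h:ℤ) ≤ -((((κ mq).val:ℤ) - ((κ mp).val:ℤ))) ∧ -((((κ mq).val:ℤ) - ((κ mp).val:ℤ))) ≤ (e:ℤ) - h) := by
    by_cases hmm : mp = mq
    · left; exact ⟨hmm, by rw [hmm]; ring⟩
    · obtain ⟨hw1, hw2⟩ := kappa_window κ he2 hh hadm hmp hmq hmm
      have hδlt : (κ mq - κ mp).val < e := ZMod.val_lt _
      have hdvd3 : (e:ℤ) ∣ ((((κ mq - κ mp).val : ℕ):ℤ) - (((κ mq).val:ℤ) - ((κ mp).val:ℤ))) := by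
        rw [← ZMod.intCast_zmod_eq_zero_iff_dvd]
        push_cast [ZMod.natCast_val, ZMod.cast_id]
        ring
      obtain ⟨k2, hk2⟩ := hdvd3
      have hrange := int_mul_range e k2 (by omega) (by omega) (by omega)
      rcases hrange with hr0 | hr1
      · right; left; omega
      · right; right; omega
  -- D case analysis
  have hDcase : ((h:ℤ) ≤ (((rq:ℤ) - cq) - ((rp:ℤ) - cp)) ∨
      (((rq:ℤ) - cq) - ((rp:ℤ) - cp)) ≤ -(h:ℤ) ∨
      ((((rq:ℤ) - cq) - ((rp:ℤ) - cp)) = 0 ∧ mp = mq)) := by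
    rcases htf with ⟨hmm, ht0⟩ | (⟨h1, h2⟩ | ⟨h1, h2⟩) <;> rcases hkf with hc | hc | hc <;> omega
  -- bounds on the scaled difference
  have hθsplit : (ℓ:ℤ) * ((rq:ℤ) - cq) - (ℓ:ℤ) * ((rp:ℤ) - cp)
      = (ℓ:ℤ) * (((rq:ℤ) - cq) - ((rp:ℤ) - cp)) := by ring
  have hcase2 : ((h:ℤ) ≤ (((rq:ℤ) - cq) - ((rp:ℤ) - cp)) ∧
        (ℓ:ℤ) ≤ (ℓ:ℤ) * ((rq:ℤ) - cq) - (ℓ:ℤ) * ((rp:ℤ) - cp)) ∨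
      ((((rq:ℤ) - cq) - ((rp:ℤ) - cp)) ≤ -(h:ℤ) ∧
        (ℓ:ℤ) * ((rq:ℤ) - cq) - (ℓ:ℤ) * ((rp:ℤ) - cp) ≤ -(ℓ:ℤ)) ∨
      ((((rq:ℤ) - cq) - ((rp:ℤ) - cp)) = 0 ∧ mp = mq ∧
        (ℓ:ℤ) * ((rq:ℤ) - cq) - (ℓ:ℤ) * ((rp:ℤ) - cp) = 0) := by
    rcases hDcase with hd | hd | ⟨hd, hmm⟩
    · left
      refine ⟨hd, ?_⟩
      rw [hθsplit]
      calc (ℓ:ℤ) = (ℓ:ℤ) * 1 := by ring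
      _ ≤ _ := by
          apply mul_le_mul_of_nonneg_left (by omega) (by positivity)
    · right; left
      refine ⟨hd, ?_⟩
      rw [hθsplit]
      calc (ℓ:ℤ) * (((rq:ℤ) - cq) - ((rp:ℤ) - cp)) ≤ (ℓ:ℤ) * (-1) := by
            apply mul_le_mul_of_nonneg_left (by omega) (by positivity)
      _ = -(ℓ:ℤ) := by ring
    · right; right
      refine ⟨hd, hmm, ?_⟩
      rw [hθsplit, hd]; ring
  constructor
  · simp only [NodeDom, thetaPos]
    rcases hcase2 with ⟨hd, hu⟩ | ⟨hd, hu⟩ | ⟨hd, hmm, hu⟩ <;>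
      constructor <;> intro hdom
    · omega
    · left; omega
    · rcases hdom with hlt | ⟨heq, hsum⟩ <;> omega
    · omega
    · rcases hdom with hlt | ⟨heq, hsum⟩ <;> omega
    · right; constructor <;> omega
  · intro hre
    have hcpq : cp = cq := by
      rcases hDcase with hd | hd | ⟨hd, hmm⟩ <;> omega
    refine ⟨hcpq, ?_⟩
    rcases htf with ⟨hmm, ht0⟩ | (⟨h1, h2⟩ | ⟨h1, h2⟩) <;> rcases hkf with hc | hc | hc <;> omega

end AuxDom

section AuxFinsum

lemma finsum_dval_eq_zero (e h : ℕ) (κ : ℕ → ZMod e) (x y : ℕ → ℝ) (i j : ℕ)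
    (hxy : pairV e h κ x i j = pairV e h κ y i j) :
    ∑ᶠ r : ℤ, dval e h κ x y i j r = 0 := by
  apply finsum_eq_zero_of_forall_eq_zero
  intro r
  have hA : ¬ (OnWall e h κ x i j r ∧ InLt e h κ y i j r) := by
    rintro ⟨h1, h2⟩
    rw [OnWall] at h1
    rw [InLt] at h2
    rw [show pairV e h κ y i j - (r:ℝ) * (e:ℝ) = 0 by rw [← hxy, h1]; ring] at h2
    simp at h2
  have hB : ¬ (InGt e h κ x i j r ∧ OnWall e h κ y i j r) := by
    rintro ⟨h1, h2⟩
    rw [OnWall] at h2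
    rw [InGt] at h1
    rw [show pairV e h κ x i j - (r:ℝ) * (e:ℝ) = 0 by rw [hxy, h2]; ring] at h1
    simp at h1
  rw [dval, if_neg hA, if_neg hB]

lemma finsum_dval_eq (e h : ℕ) (he : 2 ≤ e) (κ : ℕ → ZMod e) (x y : ℕ → ℝ) (i j : ℕ)
    (V P s : ℤ) (hs : s = 1 ∨ s = -1)
    (hx : pairV e h κ x i j = (V : ℝ))
    (hy : pairV e h κ y i j = ((V + s : ℤ) : ℝ))
    (hP : pairV e h κ (fun _ => 0) i j = (P : ℝ)) :
    ∑ᶠ r : ℤ, dval e h κ x y i j r =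
      (if (e:ℤ) ∣ V ∧ 0 < s * (P - V) then 1 else 0) -
      (if (e:ℤ) ∣ (V + s) ∧ 0 < s * (P - V - s) then 1 else 0) := by
  classical
  have he0 : (0:ℤ) < e := by omega
  have hwx : ∀ r : ℤ, OnWall e h κ x i j r ↔ V = r * e := by
    intro r
    rw [OnWall, hx]
    constructor
    · intro H; exact_mod_cast H
    · intro H; exact_mod_cast H
  have hwy : ∀ r : ℤ, OnWall e h κ y i j r ↔ V + s = r * e := by
    intro r
    rw [OnWall, hy]
    constructor
    · intro H; exact_mod_cast H
    · intro H; exact_mod_cast H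
  have hlt : ∀ r : ℤ, InLt e h κ y i j r ↔ 0 < (V + s - r * e) * (P - r * e) := by
    intro r
    rw [InLt, hy, hP]
    rw [show ((V + s : ℤ):ℝ) - (r:ℝ) * (e:ℝ) = ((V + s - r * e : ℤ) : ℝ) by push_cast; ring,
        show ((P:ℤ):ℝ) - (r:ℝ) * (e:ℝ) = ((P - r * e : ℤ) : ℝ) by push_cast; ring,
        ← Int.cast_mul, Int.cast_pos]
  have hgt : ∀ r : ℤ, InGt e h κ x i j r ↔ (V - r * e) * (P - r * e) < 0 := by
    intro r
    rw [InGt, hx, hP]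
    rw [show ((V:ℤ):ℝ) - (r:ℝ) * (e:ℝ) = ((V - r * e : ℤ) : ℝ) by push_cast; ring,
        show ((P:ℤ):ℝ) - (r:ℝ) * (e:ℝ) = ((P - r * e : ℤ) : ℝ) by push_cast; ring,
        ← Int.cast_mul]
    exact Int.cast_lt_zero
  have hsabs : s * s = 1 := by rcases hs with h1 | h1 <;> rw [h1] <;> ring
  have hnotboth : ¬ ((e:ℤ) ∣ V ∧ (e:ℤ) ∣ (V + s)) := by
    rintro ⟨h1, h2⟩
    have h3 : (e:ℤ) ∣ s := by simpa using dvd_sub h2 h1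
    have h4 : (e:ℤ) ∣ 1 := by
      rcases hs with h5 | h5
      · rwa [h5] at h3
      · rw [h5] at h3; exact (dvd_neg).mp h3
    have := Int.le_of_dvd one_pos h4
    omega
  by_cases hdV : (e:ℤ) ∣ V
  · obtain ⟨r1, hr1⟩ := hdV
    have hdV' : (e:ℤ) ∣ V := ⟨r1, hr1⟩
    have hdVs : ¬ (e:ℤ) ∣ (V + s) := fun hcon => hnotboth ⟨hdV', hcon⟩
    have hre : r1 * (e:ℤ) = V := by rw [hr1]; ring
    rw [finsum_eq_single _ r1 ?_]
    · rw [dval]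
      by_cases hc1 : 0 < s * (P - V)
      · rw [if_pos ⟨(hwx r1).mpr hre.symm, (hlt r1).mpr (by rw [hre, show V + s - V = s by ring]; exact hc1)⟩]
        rw [if_pos ⟨hdV', hc1⟩, if_neg (fun hh => hdVs hh.1)]
        ring
      · have hA : ¬ (OnWall e h κ x i j r1 ∧ InLt e h κ y i j r1) := by
          rintro ⟨_, h2⟩
          rw [hlt r1, hre, show V + s - V = s by ring] at h2
          exact hc1 h2
        have hB : ¬ (InGt e h κ x i j r1 ∧ OnWall e h κ y i j r1) := by
          rintro ⟨_, h2⟩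
          exact hdVs ⟨r1, by rw [(hwy r1).mp h2]; ring⟩
        rw [if_neg hA, if_neg hB, if_neg (fun hh => hc1 hh.2), if_neg (fun hh => hdVs hh.1)]
        ring
    · intro r hr
      have hA : ¬ (OnWall e h κ x i j r ∧ InLt e h κ y i j r) := by
        rintro ⟨h1, _⟩
        apply hr
        have h2 := (hwx r).mp h1
        have h3 : (e:ℤ) * r = (e:ℤ) * r1 := by
          rw [← hr1, h2]; ring
        exact mul_left_cancel₀ (by omega) h3
      have hB : ¬ (InGt e h κ x i j r ∧ OnWall e h κ y i j r) := by
        rintro ⟨_, h2⟩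
        exact hdVs ⟨r, by rw [(hwy r).mp h2]; ring⟩
      rw [dval, if_neg hA, if_neg hB]
  · by_cases hdW : (e:ℤ) ∣ (V + s)
    · obtain ⟨r2, hr2⟩ := hdW
      have hdW' : (e:ℤ) ∣ (V + s) := ⟨r2, hr2⟩
      have hre : r2 * (e:ℤ) = V + s := by rw [hr2]; ring
      rw [finsum_eq_single _ r2 ?_]
      · rw [dval]
        have hA : ¬ (OnWall e h κ x i j r2 ∧ InLt e h κ y i j r2) := by
          rintro ⟨h1, _⟩
          exact hdV ⟨r2, by rw [(hwx r2).mp h1]; ring⟩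
        rw [if_neg hA]
        by_cases hc2 : 0 < s * (P - V - s)
        · rw [if_pos ⟨(hgt r2).mpr (by rw [hre, show V - (V + s) = -s by ring]; nlinarith [hc2, hsabs]), (hwy r2).mpr hre.symm⟩,
              if_neg (fun hh => hdV hh.1), if_pos ⟨hdW', hc2⟩]
          ring
        · have hB : ¬ (InGt e h κ x i j r2 ∧ OnWall e h κ y i j r2) := by
            rintro ⟨h1, _⟩
            rw [hgt r2, hre, show V - (V + s) = -s by ring] at h1
            apply hc2
            nlinarith [h1, hsabs]
          rw [if_neg hB, if_neg (fun hh => hdV hh.1), if_neg (fun hh => hc2 hh.2)]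
          ring
      · intro r hr
        have hA : ¬ (OnWall e h κ x i j r ∧ InLt e h κ y i j r) := by
          rintro ⟨h1, _⟩
          exact hdV ⟨r, by rw [(hwx r).mp h1]; ring⟩
        have hB : ¬ (InGt e h κ x i j r ∧ OnWall e h κ y i j r) := by
          rintro ⟨_, h2⟩
          apply hr
          have h3 : (e:ℤ) * r = (e:ℤ) * r2 := by
            rw [← hr2, (hwy r).mp h2]; ring
          exact mul_left_cancel₀ (by omega) h3
        rw [dval, if_neg hA, if_neg hB]
    · rw [if_neg (fun hh => hdV hh.1), if_neg (fun hh => hdW hh.1)]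
      rw [finsum_eq_zero_of_forall_eq_zero ?_]
      · ring
      · intro r
        have hA : ¬ (OnWall e h κ x i j r ∧ InLt e h κ y i j r) := by
          rintro ⟨h1, _⟩
          exact hdV ⟨r, by rw [(hwx r).mp h1]; ring⟩
        have hB : ¬ (InGt e h κ x i j r ∧ OnWall e h κ y i j r) := by
          rintro ⟨_, h2⟩
          exact hdW ⟨r, by rw [(hwy r).mp h2]; ring⟩
        rw [dval, if_neg hA, if_neg hB]

end AuxFinsum

section AuxCast

lemma bz_cast {e : ℕ} [NeZero e] (κm : ZMod e) (L d : ℕ) :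
    ((((L:ℤ) + ((e:ℤ) - (κm.val:ℤ) - ((d:ℕ):ℤ))) : ℤ) : ZMod e)
      = - (κm + ((d + 1 : ℕ) : ZMod e) - ((L + 1 : ℕ) : ZMod e)) := by
  push_cast [ZMod.natCast_val, ZMod.cast_id]
  rw [ZMod.natCast_self]
  ring

lemma res_succ (e : ℕ) (κ : ℕ → ZMod e) (r c m : ℕ) :
    res e κ (r + 1, c + 1, m) = res e κ (r, c, m) := by
  simp only [res]; push_cast; ring

lemma res_row_succ (e : ℕ) (κ : ℕ → ZMod e) (r c m : ℕ) :
    res e κ (r + 1, c, m) = res e κ (r, c, m) - 1 := by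
  simp only [res]; push_cast; ring

lemma coord_div_mod (h m k : ℕ) (hh : 0 < h) (hk : k < h) :
    (h * m + k) / h = m ∧ (h * m + k) % h = k := by
  rw [Nat.mul_add_div hh, Nat.mul_add_mod, Nat.div_eq_of_lt hk, Nat.mod_eq_of_lt hk]
  omega

lemma coord_pred (h b : ℕ) (hh : 0 < h) (hb : b % h ≠ 0) :
    (b-1)/h = b/h ∧ (b-1)%h = b%h - 1 := by
  have h1 := Nat.div_add_mod b h
  have h3 : b % h < h := Nat.mod_lt b hh
  have h2 : b - 1 = h * (b / h) + (b % h - 1) := by omega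
  obtain ⟨d1, d2⟩ := coord_div_mod h (b / h) (b % h - 1) hh (by omega)
  rw [h2, d1, d2]
  omega

lemma coord_succ (h b : ℕ) (hh : 0 < h) (hb : b % h < h - 1) :
    (b+1)/h = b/h ∧ (b+1)%h = b%h + 1 := by
  have h1 := Nat.div_add_mod b h
  have h2 : b + 1 = h * (b / h) + (b % h + 1) := by omega
  obtain ⟨d1, d2⟩ := coord_div_mod h (b / h) (b % h + 1) hh (by omega)
  rw [h2, d1, d2]
  omega

end AuxCast

lemma ite_prop_congr {P Q : Prop} [Decidable P] [Decidable Q] (h : P ↔ Q) (a b : ℤ) :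
    (if P then a else b) = (if Q then a else b) := by
  by_cases hq : P
  · rw [if_pos hq, if_pos (h.mp hq)]
  · rw [if_neg hq, if_neg (fun hx => hq (h.mpr hx))]

theorem statement_9 (h ℓ e : ℕ) (κ : ℕ → ZMod e)
    (hh : 1 ≤ h) (hl : 1 ≤ ℓ) (he : h * ℓ < e)
    (hadm : HAdmissible e h ℓ κ) (hnorm : Normalized e h ℓ κ)
    (lam μ : MultiPartition ℓ) (hc : HCols h lam) (hcμ : HCols h μ)
    (x : ZMod e) (Y : Node)
    (hY : AddD h ℓ (diag lam) Y) (hYres : res e κ Y = x)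
    (hμ : diag μ = diag lam ∪ {Y}) :
    stepDeg e h ℓ κ (ptv h lam) (ptv h μ) =
      (Set.ncard {A : Node | AddD h ℓ (diag lam) A ∧ res e κ A = x ∧ NodeDom ℓ Y A} : ℤ) -
        (Set.ncard {R : Node | RemD ℓ (diag lam) R ∧ res e κ R = x ∧ NodeDom ℓ Y R} : ℤ) := by
  classical
  obtain ⟨rY, cY, mY⟩ := Y
  obtain ⟨hcY1, hcYh, hmY, hrY, haddY⟩ := (addD_iff lam rY cY mY).mp hY
  have hh0 : 0 < h := hh
  have he2 : 2 ≤ e := by nlinarith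
  haveI : NeZero e := ⟨by omega⟩
  have hYnot : ((rY, cY, mY) : Node) ∉ diag lam := hY.2.2.1
  have hdm : ∀ b : ℕ, h * (b / h) + b % h = b := fun b => Nat.div_add_mod b h
  have hmod : ∀ b : ℕ, b % h < h := fun b => Nat.mod_lt b hh0
  have hdivlt : ∀ b : ℕ, b < h * ℓ → b / h < ℓ := fun b hb => Nat.div_lt_of_lt_mul (by omega)
  have hmulle : ∀ m : ℕ, m < ℓ → h * m + h ≤ h * ℓ := by
    intro m hm
    have h1 : h * (m+1) ≤ h * ℓ := Nat.mul_le_mul_left h (by omega)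
    rw [Nat.mul_succ] at h1
    exact h1
  set a0 := h * mY + (cY - 1) with ha0
  obtain ⟨ha0d, ha0m⟩ := coord_div_mod h mY (cY - 1) hh0 (by omega)
  rw [← ha0] at ha0d ha0m
  have ha0lt : a0 < h * ℓ := by
    have := hmulle mY hmY
    omega
  set Lc : ℕ → ℕ := fun b => colLen lam (b / h) (b % h + 1) with hLcdef
  set bz : ℕ → ℤ := fun b => ((Lc b : ℤ) + rhoZ e h κ b) with hbzdef
  have hLcb : ∀ b, Lc b = colLen lam (b / h) (b % h + 1) := fun _ => rfl
  have hbzb : ∀ b, bz b = (Lc b : ℤ) + ((e:ℤ) - (((κ (b / h)).val : ℕ) : ℤ) - ((b % h : ℕ) : ℤ)) :=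
    fun _ => rfl
  have hLa0 : Lc a0 = rY - 1 := by
    rw [hLcb, ha0d, ha0m, show cY - 1 + 1 = cY by omega]
    omega
  -- casting bridge
  have hcastbz : ∀ b : ℕ, ((bz b : ℤ) : ZMod e) = - res e κ (Lc b + 1, b % h + 1, b / h) := by
    intro b
    rw [hbzb]
    have h1 := bz_cast (κ (b / h)) (Lc b) (b % h)
    rw [h1]
    rfl
  have hYnode : res e κ (Lc a0 + 1, a0 % h + 1, a0 / h) = x := by
    rw [hLa0, ha0d, ha0m, show rY - 1 + 1 = rY by omega, show cY - 1 + 1 = cY by omega]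
    exact hYres
  have hres_add : ∀ b : ℕ, ((e:ℤ) ∣ (bz a0 - bz b) ↔ res e κ (Lc b + 1, b % h + 1, b / h) = x) := by
    intro b
    rw [← ZMod.intCast_zmod_eq_zero_iff_dvd, Int.cast_sub, hcastbz, hcastbz, hYnode]
    constructor
    · intro h5; linear_combination h5
    · intro h5; rw [h5]; ring
  have hres_rem : ∀ b : ℕ, ((e:ℤ) ∣ (bz a0 + 1 - bz b) ↔ res e κ (Lc b, b % h + 1, b / h) = x) := by
    intro b
    rw [← ZMod.intCast_zmod_eq_zero_iff_dvd]
    have hc1 : ((bz a0 + 1 - bz b : ℤ) : ZMod e) = res e κ (Lc b, b % h + 1, b / h) - x := by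
      push_cast
      rw [hcastbz, hcastbz, hYnode, res_row_succ e κ (Lc b) (b % h + 1) (b / h)]
      ring
    rw [hc1]
    constructor
    · intro h5; linear_combination h5
    · intro h5; rw [h5]; ring
  -- dominance bridge
  have hdom_add : ∀ b : ℕ, b < h * ℓ → res e κ (Lc b + 1, b % h + 1, b / h) = x →
      (NodeDom ℓ ((rY, cY, mY) : Node) (Lc b + 1, b % h + 1, b / h) ↔ Lc a0 < Lc b) := by
    intro b hb hr
    have h1 := (nodeDom_core κ hh hl he hadm rY cY mY (Lc b + 1) (b % h + 1) (b / h)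
      hmY (hdivlt b hb) hcY1 hcYh (by omega) (by have := hmod b; omega)
      (hYres.trans hr.symm)).1
    rw [h1]
    omega
  have hdom_rem : ∀ b : ℕ, b < h * ℓ → res e κ (Lc b, b % h + 1, b / h) = x →
      (NodeDom ℓ ((rY, cY, mY) : Node) (Lc b, b % h + 1, b / h) ↔ Lc a0 + 1 < Lc b) := by
    intro b hb hr
    have h1 := (nodeDom_core κ hh hl he hadm rY cY mY (Lc b) (b % h + 1) (b / h)
      hmY (hdivlt b hb) hcY1 hcYh (by omega) (by have := hmod b; omega)
      (hYres.trans hr.symm)).1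
    rw [h1]
    omega
  -- point values
  have hptlam : ∀ b : ℕ, ptv h lam b = ((Lc b : ℕ) : ℝ) := fun _ => rfl
  have hcolmu := (diag_union_forward lam μ rY cY mY hcY1 hYnot hμ).2.2.2.2
  have hptmu : ∀ b : ℕ, b ≠ a0 → ptv h μ b = ((Lc b : ℕ) : ℝ) := by
    intro b hb
    have h1 := hcolmu (b / h) (b % h + 1) (by omega)
    have h2 : ¬ (b / h = mY ∧ b % h + 1 = cY) := by
      rintro ⟨e1, e2⟩
      apply hb
      have h3 := hdm b
      rw [e1] at h3
      omega
    rw [if_neg h2, Nat.add_zero] at h1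
    show ((colLen μ (b / h) (b % h + 1) : ℕ) : ℝ) = _
    rw [h1, ← hLcb b]
    simp
  have hptmu0 : ptv h μ a0 = ((Lc a0 : ℕ) : ℝ) + 1 := by
    have h1 := hcolmu (a0 / h) (a0 % h + 1) (by omega)
    rw [if_pos ⟨ha0d, by omega⟩] at h1
    show ((colLen μ (a0 / h) (a0 % h + 1) : ℕ) : ℝ) = _
    rw [h1, ← hLcb a0]
    push_cast
    ring
  -- pairings
  have hpairlam : ∀ i j : ℕ, pairV e h κ (ptv h lam) i j = ((bz i - bz j : ℤ) : ℝ) := by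
    intro i j
    rw [hbzb i, hbzb j]
    simp only [pairV, rhoZ]
    rw [hptlam i, hptlam j]
    push_cast
    ring
  have hpairrho : ∀ i j : ℕ,
      pairV e h κ (fun _ => (0:ℝ)) i j = ((rhoZ e h κ i - rhoZ e h κ j : ℤ) : ℝ) := by
    intro i j
    simp only [pairV, rhoZ]
    push_cast
    ring
  -- the predicates
  set PA : ℕ → Prop := fun b => (e:ℤ) ∣ (bz a0 - bz b) ∧ Lc a0 < Lc b with hPAdef
  set PR : ℕ → Prop := fun b => (e:ℤ) ∣ (bz a0 + 1 - bz b) ∧ Lc a0 + 1 < Lc b with hPRdef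
  set cf : ℕ → ℤ := fun b => (if PA b then (1:ℤ) else 0) - (if PR b then (1:ℤ) else 0) with hcfdef
  have hPAb : ∀ b, PA b ↔ ((e:ℤ) ∣ (bz a0 - bz b) ∧ Lc a0 < Lc b) := fun _ => Iff.rfl
  have hPRb : ∀ b, PR b ↔ ((e:ℤ) ∣ (bz a0 + 1 - bz b) ∧ Lc a0 + 1 < Lc b) := fun _ => Iff.rfl
  have hcfb : ∀ b, cf b = (if PA b then (1:ℤ) else 0) - (if PR b then (1:ℤ) else 0) := fun _ => rfl
  -- the per-pair evaluation
  have hpair : ∀ i j : ℕ, i < j →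
      (∑ᶠ r : ℤ, dval e h κ (ptv h lam) (ptv h μ) i j r)
        = (if i = a0 then cf j else if j = a0 then cf i else 0) := by
    intro i j hij
    by_cases hia : i = a0
    · subst hia
      have hy : pairV e h κ (ptv h μ) a0 j = ((bz a0 - bz j + 1 : ℤ) : ℝ) := by
        rw [hbzb a0, hbzb j]
        simp only [pairV, rhoZ]
        rw [hptmu0, hptmu j (by omega)]
        push_cast
        ring
      have heval := finsum_dval_eq e h he2 κ (ptv h lam) (ptv h μ) a0 j
        (bz a0 - bz j) (rhoZ e h κ a0 - rhoZ e h κ j) 1 (Or.inl rfl)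
        (hpairlam a0 j) hy (hpairrho a0 j)
      rw [heval, if_pos rfl, hcfb j]
      have hiff1 : ((e:ℤ) ∣ (bz a0 - bz j) ∧
          0 < 1 * (rhoZ e h κ a0 - rhoZ e h κ j - (bz a0 - bz j))) ↔ PA j := by
        rw [hPAb j]
        have hv1 : (1:ℤ) * (rhoZ e h κ a0 - rhoZ e h κ j - (bz a0 - bz j))
            = (Lc j : ℤ) - (Lc a0 : ℤ) := by
          rw [hbzb a0, hbzb j]
          simp only [rhoZ]
          ring
        rw [hv1]
        constructor
        · rintro ⟨hd, hlt⟩; exact ⟨hd, by omega⟩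
        · rintro ⟨hd, hlt⟩; exact ⟨hd, by omega⟩
      have hiff2 : ((e:ℤ) ∣ (bz a0 - bz j + 1) ∧
          0 < 1 * (rhoZ e h κ a0 - rhoZ e h κ j - (bz a0 - bz j) - 1)) ↔ PR j := by
        rw [hPRb j]
        have hv2 : (1:ℤ) * (rhoZ e h κ a0 - rhoZ e h κ j - (bz a0 - bz j) - 1)
            = (Lc j : ℤ) - (Lc a0 : ℤ) - 1 := by
          rw [hbzb a0, hbzb j]
          simp only [rhoZ]
          ring
        rw [hv2]
        constructor
        · rintro ⟨hd, hlt⟩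
          refine ⟨?_, by omega⟩
          have he1 : bz a0 + 1 - bz j = bz a0 - bz j + 1 := by ring
          rw [he1]
          exact hd
        · rintro ⟨hd, hlt⟩
          refine ⟨?_, by omega⟩
          have he1 : bz a0 - bz j + 1 = bz a0 + 1 - bz j := by ring
          rw [he1]
          exact hd
      rw [ite_prop_congr hiff1, ite_prop_congr hiff2]
    · by_cases hja : j = a0
      · subst hja
        have hy : pairV e h κ (ptv h μ) i a0 = ((bz i - bz a0 + (-1) : ℤ) : ℝ) := by
          rw [hbzb i, hbzb a0]
          simp only [pairV, rhoZ]
          rw [hptmu0, hptmu i hia]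
          push_cast
          ring
        have heval := finsum_dval_eq e h he2 κ (ptv h lam) (ptv h μ) i a0
          (bz i - bz a0) (rhoZ e h κ i - rhoZ e h κ a0) (-1) (Or.inr rfl)
          (hpairlam i a0) hy (hpairrho i a0)
        rw [heval, if_neg hia, if_pos rfl, hcfb i]
        have hiff1 : ((e:ℤ) ∣ (bz i - bz a0) ∧
            0 < (-1) * (rhoZ e h κ i - rhoZ e h κ a0 - (bz i - bz a0))) ↔ PA i := by
          rw [hPAb i]
          have hv1 : (-1:ℤ) * (rhoZ e h κ i - rhoZ e h κ a0 - (bz i - bz a0))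
              = (Lc i : ℤ) - (Lc a0 : ℤ) := by
            rw [hbzb i, hbzb a0]
            simp only [rhoZ]
            ring
          rw [hv1]
          constructor
          · rintro ⟨hd, hlt⟩
            refine ⟨?_, by omega⟩
            have he1 : bz a0 - bz i = -(bz i - bz a0) := by ring
            rw [he1]
            exact dvd_neg.mpr hd
          · rintro ⟨hd, hlt⟩
            refine ⟨?_, by omega⟩
            have he1 : bz i - bz a0 = -(bz a0 - bz i) := by ring
            rw [he1]
            exact dvd_neg.mpr hd
        have hiff2 : ((e:ℤ) ∣ (bz i - bz a0 + (-1)) ∧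
            0 < (-1) * (rhoZ e h κ i - rhoZ e h κ a0 - (bz i - bz a0) - (-1))) ↔ PR i := by
          rw [hPRb i]
          have hv2 : (-1:ℤ) * (rhoZ e h κ i - rhoZ e h κ a0 - (bz i - bz a0) - (-1))
              = (Lc i : ℤ) - (Lc a0 : ℤ) - 1 := by
            rw [hbzb i, hbzb a0]
            simp only [rhoZ]
            ring
          rw [hv2]
          constructor
          · rintro ⟨hd, hlt⟩
            refine ⟨?_, by omega⟩
            have he1 : bz a0 + 1 - bz i = -(bz i - bz a0 + (-1)) := by ring
            rw [he1]
            exact dvd_neg.mpr hd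
          · rintro ⟨hd, hlt⟩
            refine ⟨?_, by omega⟩
            have he1 : bz i - bz a0 + (-1) = -(bz a0 + 1 - bz i) := by ring
            rw [he1]
            exact dvd_neg.mpr hd
        rw [ite_prop_congr hiff1, ite_prop_congr hiff2]
      · rw [if_neg hia, if_neg hja]
        apply finsum_dval_eq_zero
        simp only [pairV]
        rw [hptlam i, hptlam j, hptmu i hia, hptmu j hja]
  have hcf0 : cf a0 = 0 := by
    rw [hcfb a0]
    have hA : ¬ PA a0 := by
      rw [hPAb a0]; rintro ⟨_, hlt⟩; omega
    have hB : ¬ PR a0 := by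
      rw [hPRb a0]
      rintro ⟨hd, _⟩
      rw [show bz a0 + 1 - bz a0 = 1 by ring] at hd
      have := Int.le_of_dvd one_pos hd
      omega
    rw [if_neg hA, if_neg hB]
    ring
  have hstep : stepDeg e h ℓ κ (ptv h lam) (ptv h μ) = ∑ b ∈ Finset.range (h*ℓ), cf b := by
    rw [stepDeg]
    have hterm : ∀ i ∈ Finset.range (h*ℓ),
        (∑ j ∈ Finset.range (h*ℓ),
          if i < j then ∑ᶠ r : ℤ, dval e h κ (ptv h lam) (ptv h μ) i j r else 0)
        = (if i = a0 then (∑ j ∈ Finset.range (h*ℓ), if a0 < j then cf j else 0) else 0)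
          + (if i < a0 then cf i else 0) := by
      intro i _
      by_cases hia : i = a0
      · subst hia
        rw [if_pos rfl, if_neg (lt_irrefl _), add_zero]
        apply Finset.sum_congr rfl
        intro j _
        by_cases hij : a0 < j
        · rw [if_pos hij, if_pos hij, hpair a0 j hij, if_pos rfl]
        · rw [if_neg hij, if_neg hij]
      · rw [if_neg hia, zero_add]
        by_cases hilt : i < a0
        · rw [if_pos hilt]
          have hjj : ∀ j ∈ Finset.range (h*ℓ),
              (if i < j then ∑ᶠ r : ℤ, dval e h κ (ptv h lam) (ptv h μ) i j r else 0)
              = (if j = a0 then cf i else 0) := by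
            intro j _
            by_cases hja : j = a0
            · subst hja
              rw [if_pos hilt, if_pos rfl, hpair i a0 hilt, if_neg hia, if_pos rfl]
            · rw [if_neg hja]
              by_cases hij : i < j
              · rw [if_pos hij, hpair i j hij, if_neg hia, if_neg hja]
              · rw [if_neg hij]
          rw [Finset.sum_congr rfl hjj,
            Finset.sum_ite_eq' (Finset.range (h*ℓ)) a0 (fun _ => cf i),
            if_pos (Finset.mem_range.mpr ha0lt)]
        · rw [if_neg hilt]
          apply Finset.sum_eq_zero
          intro j _
          by_cases hij : i < j
          · rw [if_pos hij, hpair i j hij, if_neg hia, if_neg (by omega)]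
          · rw [if_neg hij]
    rw [Finset.sum_congr rfl hterm, Finset.sum_add_distrib,
      Finset.sum_ite_eq' (Finset.range (h*ℓ)) a0
        (fun _ => (∑ j ∈ Finset.range (h*ℓ), if a0 < j then cf j else 0)),
      if_pos (Finset.mem_range.mpr ha0lt), ← Finset.sum_add_distrib]
    apply Finset.sum_congr rfl
    intro b _
    by_cases h1 : a0 < b
    · rw [if_pos h1, if_neg (by omega), add_zero]
    · by_cases h2 : b < a0
      · rw [if_neg h1, if_pos h2, zero_add]
      · have hba : b = a0 := by omega
        rw [if_neg h1, if_neg h2, hba, hcf0]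
        ring
    -- part 3: counting
  set Adb : ℕ → Prop := fun b => b % h = 0 ∨ Lc b < colLen lam (b / h) (b % h) with hAdbdef
  set Rmb : ℕ → Prop := fun b => colLen lam (b / h) (b % h + 2) < Lc b with hRmbdef
  have hAdbb : ∀ b, Adb b ↔ (b % h = 0 ∨ Lc b < colLen lam (b / h) (b % h)) := fun _ => Iff.rfl
  have hRmbb : ∀ b, Rmb b ↔ (colLen lam (b / h) (b % h + 2) < Lc b) := fun _ => Iff.rfl
  have hsum2 : ∑ b ∈ Finset.range (h*ℓ), cf b
      = ((((Finset.range (h*ℓ)).filter (fun b => PA b)).card : ℤ)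
        - (((Finset.range (h*ℓ)).filter (fun b => PR b)).card : ℤ)) := by
    calc ∑ b ∈ Finset.range (h*ℓ), cf b
        = ∑ b ∈ Finset.range (h*ℓ), ((if PA b then (1:ℤ) else 0) - (if PR b then (1:ℤ) else 0)) :=
          Finset.sum_congr rfl (fun b _ => hcfb b)
      _ = _ := by rw [Finset.sum_sub_distrib, Finset.sum_boole, Finset.sum_boole]
  have hsplitA : (((Finset.range (h*ℓ)).filter (fun b => PA b)).card)
      = ((Finset.range (h*ℓ)).filter (fun b => PA b ∧ Adb b)).card
        + ((Finset.range (h*ℓ)).filter (fun b => PA b ∧ ¬ Adb b)).card := by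
    have h0 := Finset.card_filter_add_card_filter_not
      (s := (Finset.range (h*ℓ)).filter (fun b => PA b)) Adb
    rw [Finset.filter_filter, Finset.filter_filter] at h0
    exact h0.symm
  have hsplitR : (((Finset.range (h*ℓ)).filter (fun b => PR b)).card)
      = ((Finset.range (h*ℓ)).filter (fun b => PR b ∧ Rmb b)).card
        + ((Finset.range (h*ℓ)).filter (fun b => PR b ∧ ¬ Rmb b)).card := by
    have h0 := Finset.card_filter_add_card_filter_not
      (s := (Finset.range (h*ℓ)).filter (fun b => PR b)) Rmb
    rw [Finset.filter_filter, Finset.filter_filter] at h0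
    exact h0.symm
  -- blocked columns analysis
  have hblockA : ∀ b, b < h * ℓ → PA b → ¬ Adb b →
      (b % h ≠ 0 ∧ colLen lam (b / h) (b % h) = Lc b ∧ Lc a0 + 2 ≤ Lc b) := by
    intro b hb hpa hnadb
    rw [hAdbb] at hnadb
    push_neg at hnadb
    obtain ⟨hb0, hble⟩ := hnadb
    obtain ⟨hdv, hLgt⟩ := (hPAb b).mp hpa
    have hanti : colLen lam (b / h) (b % h + 1) ≤ colLen lam (b / h) (b % h) :=
      colLen_anti lam (b / h) (b % h) (b % h + 1) (by omega) (by omega)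
    have hcolblk : colLen lam (b / h) (b % h) = Lc b := by
      have := hLcb b; omega
    refine ⟨hb0, hcolblk, ?_⟩
    by_contra hcon
    push_neg at hcon
    have hLeq : Lc b = Lc a0 + 1 := by omega
    have hresQ : res e κ (Lc b, b % h, b / h) = x := by
      rw [← res_succ e κ (Lc b) (b % h) (b / h)]
      exact (hres_add b).mp hdv
    have hQmem : ((Lc b, b % h, b / h) : Node) ∈ diag lam := by
      rw [mem_diag_iff lam (Lc b) (b % h) (b / h) (by omega) (by omega)]
      omega
    have heqn := (nodeDom_core κ hh hl he hadm rY cY mY (Lc b) (b % h) (b / h)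
      hmY (hdivlt b hb) hcY1 hcYh (by omega) (by have := hmod b; omega)
      (hYres.trans hresQ.symm)).2
    have hrow : rY = Lc b := by omega
    obtain ⟨hq1, hq2⟩ := heqn hrow
    apply hYnot
    have hnd : ((rY, cY, mY) : Node) = ((Lc b, b % h, b / h) : Node) := by
      rw [hrow, hq1, hq2]
    rw [hnd]
    exact hQmem
  have hblockR : ∀ b, b < h * ℓ → PR b → ¬ Rmb b →
      (b % h < h - 1 ∧ colLen lam (b / h) (b % h + 2) = Lc b) := by
    intro b hb hpr hnrmb
    rw [hRmbb] at hnrmb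
    push_neg at hnrmb
    obtain ⟨hdv, hLgt⟩ := (hPRb b).mp hpr
    have hanti : colLen lam (b / h) (b % h + 2) ≤ colLen lam (b / h) (b % h + 1) :=
      colLen_anti lam (b / h) (b % h + 1) (b % h + 2) (by omega) (by omega)
    have hcol2 : colLen lam (b / h) (b % h + 2) = Lc b := by
      have := hLcb b; omega
    refine ⟨?_, hcol2⟩
    by_contra hcon
    push_neg at hcon
    have := colLen_gt_h lam hc (b / h) (b % h + 2) (by have := hmod b; omega)
    omega
  -- the bijection between blocked sets
  have hBAtoBR : ∀ b, b < h * ℓ → PA b → ¬ Adb b →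
      (1 ≤ b ∧ b - 1 < h * ℓ ∧ PR (b-1) ∧ ¬ Rmb (b-1)) := by
    intro b hb hpa hnadb
    obtain ⟨hb0, hcolblk, hL2⟩ := hblockA b hb hpa hnadb
    obtain ⟨hdv, hLgt⟩ := (hPAb b).mp hpa
    obtain ⟨hd1, hd2⟩ := coord_pred h b hh0 hb0
    have hLpred : Lc (b-1) = Lc b := by
      rw [hLcb (b-1), hd1, hd2, show b % h - 1 + 1 = b % h by omega, hcolblk]
    have hbz1 : bz (b-1) = bz b + 1 := by
      rw [hbzb (b-1), hbzb b, hd1, hd2, hLpred]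
      omega
    refine ⟨by have := hdm b; omega, by omega, ?_, ?_⟩
    · rw [hPRb]
      constructor
      · rw [show bz a0 + 1 - bz (b-1) = bz a0 - bz b by omega]
        exact hdv
      · omega
    · rw [hRmbb, hd1, hd2, show b % h - 1 + 2 = b % h + 1 by omega, hLpred, ← hLcb b]
      omega
  have hBRtoBA : ∀ b, b < h * ℓ → PR b → ¬ Rmb b →
      (b + 1 < h * ℓ ∧ PA (b+1) ∧ ¬ Adb (b+1)) := by
    intro b hb hpr hnrmb
    obtain ⟨hbm, hcol2⟩ := hblockR b hb hpr hnrmb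
    obtain ⟨hdv, hLgt⟩ := (hPRb b).mp hpr
    obtain ⟨hd1, hd2⟩ := coord_succ h b hh0 hbm
    have hlt1 : b + 1 < h * ℓ := by
      have h3 := hdm b
      have h4 := hmulle (b / h) (hdivlt b hb)
      have := hmod b
      omega
    have hLsucc : Lc (b+1) = Lc b := by
      rw [hLcb (b+1), hd1, hd2]
      exact hcol2
    have hbz1 : bz (b+1) = bz b - 1 := by
      rw [hbzb (b+1), hbzb b, hd1, hd2, hLsucc]
      omega
    refine ⟨hlt1, ?_, ?_⟩
    · rw [hPAb]
      constructor
      · rw [show bz a0 - bz (b+1) = bz a0 + 1 - bz b by omega]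
        exact hdv
      · omega
    · rw [hAdbb]
      push_neg
      constructor
      · rw [hd2]; omega
      · have h8 := hLcb b
        rw [hd1, hd2]
        omega
  have hBAcard : ((Finset.range (h*ℓ)).filter (fun b => PA b ∧ ¬ Adb b)).card
      = ((Finset.range (h*ℓ)).filter (fun b => PR b ∧ ¬ Rmb b)).card := by
    refine Finset.card_bij' (fun b _ => b - 1) (fun b _ => b + 1) ?_ ?_ ?_ ?_
    case refine_1 =>
      intro b hb
      rw [Finset.mem_filter, Finset.mem_range] at hb ⊢
      obtain ⟨h1, h2, h3⟩ := hb
      obtain ⟨h4, h5, h6, h7⟩ := hBAtoBR b h1 h2 h3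
      exact ⟨h5, h6, h7⟩
    case refine_2 =>
      intro b hb
      rw [Finset.mem_filter, Finset.mem_range] at hb ⊢
      obtain ⟨h1, h2, h3⟩ := hb
      obtain ⟨h4, h5, h6⟩ := hBRtoBA b h1 h2 h3
      exact ⟨h4, h5, h6⟩
    case refine_3 =>
      intro b hb
      rw [Finset.mem_filter, Finset.mem_range] at hb
      obtain ⟨h1, h2, h3⟩ := hb
      obtain ⟨h4, _, _, _⟩ := hBAtoBR b h1 h2 h3
      show b - 1 + 1 = b
      omega
    case refine_4 =>
      intro b _
      show b + 1 - 1 = b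
      omega
  -- identification of the addable set
  have hinjA : Set.InjOn (fun b => ((Lc b + 1, b % h + 1, b / h) : Node))
      ↑((Finset.range (h*ℓ)).filter (fun b => PA b ∧ Adb b)) := by
    intro b1 _ b2 _ hbe
    simp only [Prod.mk.injEq] at hbe
    obtain ⟨_, hbe2, hbe3⟩ := hbe
    have e1 := hdm b1
    have e2 := hdm b2
    rw [hbe3] at e1
    omega
  have hAddncard :
      {A : Node | AddD h ℓ (diag lam) A ∧ res e κ A = x ∧ NodeDom ℓ ((rY,cY,mY):Node) A}.ncard
      = ((Finset.range (h*ℓ)).filter (fun b => PA b ∧ Adb b)).card := by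
    have hseteq : {A : Node | AddD h ℓ (diag lam) A ∧ res e κ A = x ∧ NodeDom ℓ ((rY,cY,mY):Node) A}
        = (fun b => ((Lc b + 1, b % h + 1, b / h) : Node)) ''
            ↑((Finset.range (h*ℓ)).filter (fun b => PA b ∧ Adb b)) := by
      ext A
      obtain ⟨rA, cA, mA⟩ := A
      simp only [Set.mem_setOf_eq, Set.mem_image, Finset.mem_coe, Finset.mem_filter,
        Finset.mem_range]
      constructor
      · rintro ⟨hA, hresA, hdomA'⟩
        obtain ⟨h1, h2, h3, h4, h5⟩ := (addD_iff lam rA cA mA).mp hA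
        obtain ⟨d1, d2⟩ := coord_div_mod h mA (cA - 1) hh0 (by omega)
        have hblt : h * mA + (cA - 1) < h * ℓ := by
          have := hmulle mA h3
          omega
        have hLb : Lc (h * mA + (cA - 1)) = colLen lam mA cA := by
          rw [hLcb, d1, d2, show cA - 1 + 1 = cA by omega]
        have hnode : ((Lc (h * mA + (cA - 1)) + 1, (h * mA + (cA - 1)) % h + 1,
            (h * mA + (cA - 1)) / h) : Node) = ((rA, cA, mA) : Node) := by
          rw [hLb, d1, d2, show cA - 1 + 1 = cA by omega, ← h4]
        refine ⟨h * mA + (cA - 1), ⟨hblt, ?_, ?_⟩, hnode⟩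
        · rw [hPAb]
          constructor
          · rw [hres_add, hnode]
            exact hresA
          · have h6 := hdom_add (h * mA + (cA - 1)) hblt (by rw [hnode]; exact hresA)
            rw [hnode] at h6
            exact h6.mp hdomA'
        · rw [hAdbb, d1, d2]
          rcases h5 with h5 | h5
          · left; omega
          · right
            rw [hLb]
            omega
      · rintro ⟨b, ⟨hblt, hpa, hadb⟩, hbeq⟩
        obtain ⟨hdv, hLgt⟩ := (hPAb b).mp hpa
        have hresn := (hres_add b).mp hdv
        have hAD : AddD h ℓ (diag lam) ((Lc b + 1, b % h + 1, b / h) : Node) := by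
          rw [addD_iff]
          refine ⟨by omega, by have := hmod b; omega, hdivlt b hblt, by rw [hLcb], ?_⟩
          rw [hAdbb] at hadb
          rcases hadb with h5 | h5
          · left; omega
          · right
            rw [show b % h + 1 - 1 = b % h from rfl]
            omega
        rw [← hbeq]
        exact ⟨hAD, hresn, (hdom_add b hblt hresn).mpr hLgt⟩
    rw [hseteq, Set.ncard_image_of_injOn hinjA, Set.ncard_coe_finset]
  -- identification of the removable set
  have hinjR : Set.InjOn (fun b => ((Lc b, b % h + 1, b / h) : Node))
      ↑((Finset.range (h*ℓ)).filter (fun b => PR b ∧ Rmb b)) := by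
    intro b1 _ b2 _ hbe
    simp only [Prod.mk.injEq] at hbe
    obtain ⟨_, hbe2, hbe3⟩ := hbe
    have e1 := hdm b1
    have e2 := hdm b2
    rw [hbe3] at e1
    omega
  have hRemncard :
      {R : Node | RemD ℓ (diag lam) R ∧ res e κ R = x ∧ NodeDom ℓ ((rY,cY,mY):Node) R}.ncard
      = ((Finset.range (h*ℓ)).filter (fun b => PR b ∧ Rmb b)).card := by
    have hseteq : {R : Node | RemD ℓ (diag lam) R ∧ res e κ R = x ∧ NodeDom ℓ ((rY,cY,mY):Node) R}
        = (fun b => ((Lc b, b % h + 1, b / h) : Node)) ''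
            ↑((Finset.range (h*ℓ)).filter (fun b => PR b ∧ Rmb b)) := by
      ext R
      obtain ⟨rA, cA, mA⟩ := R
      simp only [Set.mem_setOf_eq, Set.mem_image, Finset.mem_coe, Finset.mem_filter,
        Finset.mem_range]
      constructor
      · rintro ⟨hR, hresA, hdomA'⟩
        obtain ⟨h1, h2, h3, h4, h5⟩ := (remD_iff lam rA cA mA).mp hR
        have hcAh : cA ≤ h := by
          have h6 : 0 < colLen lam mA cA := by omega
          have h7 := (lt_colLen_iff lam mA cA h1 0).mp h6
          have h8 := hc mA 0
          omega
        obtain ⟨d1, d2⟩ := coord_div_mod h mA (cA - 1) hh0 (by omega)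
        have hblt : h * mA + (cA - 1) < h * ℓ := by
          have := hmulle mA h3
          omega
        have hLb : Lc (h * mA + (cA - 1)) = colLen lam mA cA := by
          rw [hLcb, d1, d2, show cA - 1 + 1 = cA by omega]
        have hnode : ((Lc (h * mA + (cA - 1)), (h * mA + (cA - 1)) % h + 1,
            (h * mA + (cA - 1)) / h) : Node) = ((rA, cA, mA) : Node) := by
          rw [hLb, d1, d2, show cA - 1 + 1 = cA by omega, ← h4]
        refine ⟨h * mA + (cA - 1), ⟨hblt, ?_, ?_⟩, hnode⟩
        · rw [hPRb]
          constructor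
          · rw [hres_rem, hnode]
            exact hresA
          · have h6 := hdom_rem (h * mA + (cA - 1)) hblt (by rw [hnode]; exact hresA)
            rw [hnode] at h6
            exact h6.mp hdomA'
        · rw [hRmbb, d1, d2, show cA - 1 + 2 = cA + 1 by omega, hLb]
          omega
      · rintro ⟨b, ⟨hblt, hpr, hrmb⟩, hbeq⟩
        obtain ⟨hdv, hLgt⟩ := (hPRb b).mp hpr
        have hresn := (hres_rem b).mp hdv
        have hRD : RemD ℓ (diag lam) ((Lc b, b % h + 1, b / h) : Node) := by
          rw [remD_iff]
          rw [hRmbb] at hrmb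
          exact ⟨by omega, by omega, hdivlt b hblt, by rw [hLcb], hrmb⟩
        rw [← hbeq]
        exact ⟨hRD, hresn, (hdom_rem b hblt hresn).mpr hLgt⟩
    rw [hseteq, Set.ncard_image_of_injOn hinjR, Set.ncard_coe_finset]
  rw [hstep, hsum2, hAddncard, hRemncard]
  omega
end BC
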